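/- Let U_1, …, U_m be nonempty closed convex sets in R^n with nonempty intersection U, and (ε_k) ⊂ [0,1) with sup_k ε_k < 1. Then the sequence (x_k) generated by A3PM from any starting point converges to a point x̄ ∈ U, and if additionally the error bound ω·dist(x, U) ≤ max_i dist(x, U_i) holds (ω ∈ (0,1)) in a neighborhood of x̄, then ‖x_{k+1} − x̄‖ ≤ sqrt(1 − (1 − sup_k ε_k)⁴ ω²/4)·‖x_k − x̄‖ for all large k. -/

import Mathlib

open Metric Filter Topology

/-- `xhat` is an `ε`-approximate projection of `x` onto `X`. -/
def ApproxProj {n : ℕ} (X : Set (EuclideanSpace ℝ (Fin n)))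
    (x xhat : EuclideanSpace ℝ (Fin n)) (ε : ℝ) : Prop :=
  Metric.infDist xhat X ≤ ε * Metric.infDist x X ∧
    ∀ z ∈ X, inner ℝ (z - xhat) (x - xhat) ≤ (0 : ℝ)

/-- Helper: `b ≤ infDist x s` from pointwise bounds. -/
lemma aux_le_infDist {n : ℕ} {s : Set (EuclideanSpace ℝ (Fin n))}
    {x : EuclideanSpace ℝ (Fin n)} {b : ℝ} (hs : s.Nonempty)
    (h : ∀ y ∈ s, b ≤ dist x y) : b ≤ Metric.infDist x s := by
  by_contra hc
  push_neg at hc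
  obtain ⟨y, hy, hlt⟩ := (Metric.infDist_lt_iff hs).1 hc
  exact absurd (h y hy) (by linarith)

set_option maxHeartbeats 1000000 in
/-- Global and linear convergence of A3PM. -/
theorem stmt18 {n m : ℕ} (hm : 0 < m) (U : Fin m → Set (EuclideanSpace ℝ (Fin n)))
    (hne : ∀ i, (U i).Nonempty) (hcl : ∀ i, IsClosed (U i)) (hcv : ∀ i, Convex ℝ (U i))
    (hU : (⋂ i, U i).Nonempty)
    (ε : ℕ → ℝ) (hε : ∀ k, ε k ∈ Set.Ico (0 : ℝ) 1) (hsup : (⨆ k, ε k) < 1)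
    (x : ℕ → EuclideanSpace ℝ (Fin n)) (p : ℕ → Fin m → EuclideanSpace ℝ (Fin n))
    (hp : ∀ k i, ApproxProj (U i) (x k) (p k i) (ε k))
    (hstep : ∀ k, ApproxProj
      (⋂ i, {z : EuclideanSpace ℝ (Fin n) | inner ℝ (x k - p k i) (z - p k i) ≤ (0 : ℝ)})
      (x k) (x (k + 1)) (ε k)) :
    ∃ xbar ∈ ⋂ i, U i, Tendsto x atTop (nhds xbar) ∧
      ∀ ω ∈ Set.Ioo (0 : ℝ) 1, ∀ V ∈ nhds xbar,
        (∀ y ∈ V, ω * Metric.infDist y (⋂ i, U i) ≤ ⨆ i : Fin m, Metric.infDist y (U i)) →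
        ∃ N : ℕ, ∀ k ≥ N,
          ‖x (k + 1) - xbar‖ ≤
            Real.sqrt (1 - (1 - ⨆ j, ε j) ^ 4 * ω ^ 2 / 4) * ‖x k - xbar‖ := by
  classical
  obtain ⟨u0, hu0⟩ := hU
  set UU := ⋂ i, U i with hUUdef
  have hUUcl : IsClosed UU := isClosed_iInter hcl
  have hUUne : UU.Nonempty := ⟨u0, hu0⟩
  set eb := ⨆ k, ε k with hebdef
  have hbddε : BddAbove (Set.range ε) := ⟨1, by rintro _ ⟨k, rfl⟩; exact (hε k).2.le⟩
  have hεle : ∀ k, ε k ≤ eb := fun k => le_ciSup hbddε k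
  have heb0 : 0 ≤ eb := le_trans (hε 0).1 (hεle 0)
  have heb1 : eb < 1 := hsup
  set Ω : ℕ → Set (EuclideanSpace ℝ (Fin n)) :=
    fun k => ⋂ i, {z | inner ℝ (x k - p k i) (z - p k i) ≤ (0 : ℝ)} with hΩdef
  have hUΩ : ∀ k, UU ⊆ Ω k := by
    intro k u hu
    refine Set.mem_iInter.2 fun i => ?_
    have h := (hp k i).2 u (Set.mem_iInter.1 hu i)
    show inner ℝ (x k - p k i) (u - p k i) ≤ (0 : ℝ)
    rw [real_inner_comm]
    exact h
  have hΩne : ∀ k, (Ω k).Nonempty := fun k => ⟨u0, hUΩ k hu0⟩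
  -- Fejér monotonicity
  have fej : ∀ u ∈ UU, ∀ k,
      ‖x k - x (k + 1)‖ ^ 2 + ‖x (k + 1) - u‖ ^ 2 ≤ ‖x k - u‖ ^ 2 := by
    intro u hu k
    have hz : inner ℝ (u - x (k + 1)) (x k - x (k + 1)) ≤ (0 : ℝ) :=
      (hstep k).2 u (hUΩ k hu)
    have hinner : (0 : ℝ) ≤ inner ℝ (x k - x (k + 1)) (x (k + 1) - u) := by
      have h2 : (0 : ℝ) ≤ inner ℝ (x (k + 1) - u) (x k - x (k + 1)) := by
        have h3 := neg_nonneg.2 hz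
        rwa [← inner_neg_left, neg_sub] at h3
      rwa [real_inner_comm] at h2
    have hexp : ‖x k - u‖ ^ 2 =
        ‖x k - x (k + 1)‖ ^ 2 + 2 * inner ℝ (x k - x (k + 1)) (x (k + 1) - u)
          + ‖x (k + 1) - u‖ ^ 2 := by
      have h := norm_add_sq_real (x k - x (k + 1)) (x (k + 1) - u)
      rwa [sub_add_sub_cancel] at h
    nlinarith [hinner]
  have dec : ∀ u ∈ UU, ∀ k, ‖x (k + 1) - u‖ ≤ ‖x k - u‖ := by
    intro u hu k
    have h := fej u hu k
    nlinarith [norm_nonneg (x (k + 1) - u), norm_nonneg (x k - u),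
      sq_nonneg ‖x k - x (k + 1)‖]
  have anti : ∀ u ∈ UU, Antitone fun k => ‖x k - u‖ := fun u hu =>
    antitone_nat_of_succ_le (fun k => dec u hu k)
  -- key distance inequality
  have step2 : ∀ k i, (1 - ε k) * infDist (x k) (U i) ≤ ‖x k - p k i‖ := by
    intro k i
    have h1 : infDist (x k) (U i) ≤ infDist (p k i) (U i) + dist (x k) (p k i) :=
      infDist_le_infDist_add_dist
    have h2 := (hp k i).1
    rw [dist_eq_norm] at h1
    linarith
  have step3 : ∀ k i, ‖x k - p k i‖ ≤ infDist (x k) (Ω k) := by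
    intro k i
    rcases eq_or_lt_of_le (norm_nonneg (x k - p k i)) with h0 | h0
    · rw [← h0]; exact infDist_nonneg
    · refine aux_le_infDist (hΩne k) fun z hz => ?_
      have hzH : inner ℝ (x k - p k i) (z - p k i) ≤ (0 : ℝ) := Set.mem_iInter.1 hz i
      have hcs : inner ℝ (x k - p k i) (x k - z) ≤ ‖x k - p k i‖ * ‖x k - z‖ :=
        real_inner_le_norm _ _
      have hsplit : ‖x k - p k i‖ ^ 2 =
          inner ℝ (x k - p k i) (x k - z) + inner ℝ (x k - p k i) (z - p k i) := by
        rw [← inner_add_right, sub_add_sub_cancel, real_inner_self_eq_norm_sq]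
      rw [dist_eq_norm]
      nlinarith
  have step4 : ∀ k, (1 - ε k) * infDist (x k) (Ω k) ≤ ‖x k - x (k + 1)‖ := by
    intro k
    have h1 : infDist (x k) (Ω k) ≤ infDist (x (k + 1)) (Ω k) + dist (x k) (x (k + 1)) :=
      infDist_le_infDist_add_dist
    have h2 := (hstep k).1
    rw [dist_eq_norm] at h1
    linarith
  have key : ∀ k i, (1 - eb) ^ 2 * infDist (x k) (U i) ≤ ‖x k - x (k + 1)‖ := by
    intro k i
    have h2 := step2 k i
    have h3 := step3 k i
    have h4 := step4 k
    have hεk1 : ε k < 1 := (hε k).2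
    have hεk0 : 0 ≤ ε k := (hε k).1
    have hd1 : (0 : ℝ) ≤ infDist (x k) (U i) := infDist_nonneg
    have hd2 : (0 : ℝ) ≤ infDist (x k) (Ω k) := infDist_nonneg
    have h1e : (0 : ℝ) ≤ 1 - eb := by linarith
    have h1e' : 1 - eb ≤ 1 - ε k := by have := hεle k; linarith
    nlinarith [mul_le_mul_of_nonneg_left h3 (by linarith : (0:ℝ) ≤ 1 - ε k),
      mul_le_mul_of_nonneg_left h2 h1e,
      mul_le_mul_of_nonneg_left h1e' hd1]
  -- differences tend to zero
  have anti2 : Antitone fun k => ‖x k - u0‖ ^ 2 := by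
    intro a b hab
    have h := anti u0 hu0 hab
    have hb := norm_nonneg (x b - u0)
    simp only
    nlinarith
  have bddb : BddBelow (Set.range fun k => ‖x k - u0‖ ^ 2) :=
    ⟨0, by rintro _ ⟨k, rfl⟩; positivity⟩
  have hLim : Tendsto (fun k => ‖x k - u0‖ ^ 2) atTop (𝓝 (⨅ k, ‖x k - u0‖ ^ 2)) :=
    tendsto_atTop_ciInf anti2 bddb
  have hLim' : Tendsto (fun k => ‖x (k + 1) - u0‖ ^ 2) atTop
      (𝓝 (⨅ k, ‖x k - u0‖ ^ 2)) := by
    have := hLim.comp (tendsto_add_atTop_nat 1)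
    simpa [Function.comp_def] using this
  have hdx2 : Tendsto (fun k => ‖x k - x (k + 1)‖ ^ 2) atTop (𝓝 0) := by
    have hdiff : Tendsto (fun k => ‖x k - u0‖ ^ 2 - ‖x (k + 1) - u0‖ ^ 2) atTop
        (𝓝 ((⨅ k, ‖x k - u0‖ ^ 2) - ⨅ k, ‖x k - u0‖ ^ 2)) := hLim.sub hLim'
    rw [sub_self] at hdiff
    refine squeeze_zero (fun k => by positivity) (fun k => ?_) hdiff
    have := fej u0 hu0 k
    linarith
  have hdx : Tendsto (fun k => ‖x k - x (k + 1)‖) atTop (𝓝 0) := by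
    have h := (Real.continuous_sqrt.tendsto 0).comp hdx2
    rw [Real.sqrt_zero] at h
    refine h.congr fun k => ?_
    simp [Real.sqrt_sq (norm_nonneg _)]
  have hdist0 : ∀ i, Tendsto (fun k => infDist (x k) (U i)) atTop (𝓝 0) := by
    intro i
    have hc : (0 : ℝ) < (1 - eb) ^ 2 := pow_pos (by linarith) 2
    have hub : ∀ k, infDist (x k) (U i) ≤ ((1 - eb) ^ 2)⁻¹ * ‖x k - x (k + 1)‖ := by
      intro k
      rw [le_inv_mul_iff₀ hc]
      exact key k i
    have hmul : Tendsto (fun k => ((1 - eb) ^ 2)⁻¹ * ‖x k - x (k + 1)‖) atTop (𝓝 0) := by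
      have := hdx.const_mul ((1 - eb) ^ 2)⁻¹
      simpa using this
    exact squeeze_zero (fun k => infDist_nonneg) hub hmul
  -- cluster point
  have hball : ∀ k, x k ∈ closedBall u0 ‖x 0 - u0‖ := by
    intro k
    rw [mem_closedBall, dist_eq_norm]
    exact anti u0 hu0 (Nat.zero_le k)
  obtain ⟨xbar, -, φ, hφ, hφtend⟩ :=
    (isCompact_closedBall u0 ‖x 0 - u0‖).tendsto_subseq hball
  have hxbarUU : xbar ∈ UU := by
    refine Set.mem_iInter.2 fun i => ?_
    have hcont : Tendsto (fun j => infDist (x (φ j)) (U i)) atTop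
        (𝓝 (infDist xbar (U i))) :=
      ((continuous_infDist_pt (U i)).tendsto xbar).comp hφtend
    have h0 : Tendsto (fun j => infDist (x (φ j)) (U i)) atTop (𝓝 0) :=
      (hdist0 i).comp hφ.tendsto_atTop
    exact ((hcl i).mem_iff_infDist_zero (hne i)).2 (tendsto_nhds_unique hcont h0)
  -- full convergence
  have antib : Antitone fun k => ‖x k - xbar‖ := anti xbar hxbarUU
  have hlim2 : Tendsto (fun k => ‖x k - xbar‖) atTop (𝓝 (⨅ k, ‖x k - xbar‖)) :=
    tendsto_atTop_ciInf antib ⟨0, by rintro _ ⟨k, rfl⟩; positivity⟩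
  have hsub0 : Tendsto (fun j => ‖x (φ j) - xbar‖) atTop (𝓝 0) := by
    have h1 : Tendsto (fun j => x (φ j) - xbar) atTop (𝓝 (xbar - xbar)) :=
      hφtend.sub tendsto_const_nhds
    rw [sub_self] at h1
    have := (continuous_norm.tendsto (0 : EuclideanSpace ℝ (Fin n))).comp h1
    simpa [Function.comp_def] using this
  have hInf0 : (⨅ k, ‖x k - xbar‖) = 0 :=
    tendsto_nhds_unique (hlim2.comp hφ.tendsto_atTop) hsub0
  have hxtend : Tendsto x atTop (𝓝 xbar) := by
    rw [tendsto_iff_norm_sub_tendsto_zero]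
    rw [hInf0] at hlim2
    exact hlim2
  -- 2·dist bound
  have h2dist : ∀ k, ‖x k - xbar‖ ≤ 2 * infDist (x k) UU := by
    intro k
    obtain ⟨uk, hukU, huk⟩ := hUUcl.exists_infDist_eq_dist hUUne (x k)
    have hfejk : ∀ j, k ≤ j → ‖x j - uk‖ ≤ ‖x k - uk‖ := fun j hj =>
      anti uk hukU hj
    have hnormlim : Tendsto (fun j => ‖x j - uk‖) atTop (𝓝 ‖xbar - uk‖) := by
      have h1 : Tendsto (fun j => x j - uk) atTop (𝓝 (xbar - uk)) :=
        hxtend.sub tendsto_const_nhds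
      exact (continuous_norm.tendsto _).comp h1
    have hle : ‖xbar - uk‖ ≤ ‖x k - uk‖ :=
      le_of_tendsto hnormlim (eventually_atTop.2 ⟨k, hfejk⟩)
    have hd : ‖x k - uk‖ = infDist (x k) UU := by rw [huk, dist_eq_norm]
    calc ‖x k - xbar‖ = ‖(x k - uk) + (uk - xbar)‖ := by rw [sub_add_sub_cancel]
      _ ≤ ‖x k - uk‖ + ‖uk - xbar‖ := norm_add_le _ _
      _ = ‖x k - uk‖ + ‖xbar - uk‖ := by rw [norm_sub_rev uk xbar]
      _ ≤ 2 * infDist (x k) UU := by rw [← hd]; linarith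
  refine ⟨xbar, hxbarUU, hxtend, ?_⟩
  intro ω hω V hV herr
  obtain ⟨N, hN⟩ := eventually_atTop.1 (hxtend.eventually (eventually_mem_nhds_iff.2 hV))
  refine ⟨N, fun k hk => ?_⟩
  have hxkV : x k ∈ V := mem_of_mem_nhds (hN k hk)
  have herrk : ω * infDist (x k) UU ≤ ⨆ i : Fin m, infDist (x k) (U i) := herr (x k) hxkV
  have hc : (0 : ℝ) < (1 - eb) ^ 2 := pow_pos (by linarith) 2
  haveI : Nonempty (Fin m) := ⟨⟨0, hm⟩⟩
  have hsup_le : (⨆ i : Fin m, infDist (x k) (U i)) ≤ ((1 - eb) ^ 2)⁻¹ * ‖x k - x (k + 1)‖ := by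
    refine ciSup_le fun i => ?_
    rw [le_inv_mul_iff₀ hc]
    exact key k i
  have hd2 := h2dist k
  have hω0 : (0 : ℝ) < ω := hω.1
  have hω1 : ω < 1 := hω.2
  have hstep_lb : (1 - eb) ^ 2 * ω * ‖x k - xbar‖ / 2 ≤ ‖x k - x (k + 1)‖ := by
    have h1 : ω * infDist (x k) UU ≤ ((1 - eb) ^ 2)⁻¹ * ‖x k - x (k + 1)‖ :=
      le_trans herrk hsup_le
    have h2 : (1 - eb) ^ 2 * (ω * infDist (x k) UU) ≤ ‖x k - x (k + 1)‖ :=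
      (le_inv_mul_iff₀ hc).1 h1
    have h3 : ‖x k - xbar‖ / 2 ≤ infDist (x k) UU := by linarith
    calc (1 - eb) ^ 2 * ω * ‖x k - xbar‖ / 2
        = (1 - eb) ^ 2 * (ω * (‖x k - xbar‖ / 2)) := by ring
      _ ≤ (1 - eb) ^ 2 * (ω * infDist (x k) UU) := by
          have : ω * (‖x k - xbar‖ / 2) ≤ ω * infDist (x k) UU :=
            mul_le_mul_of_nonneg_left h3 hω0.le
          exact mul_le_mul_of_nonneg_left this hc.le
      _ ≤ ‖x k - x (k + 1)‖ := h2
  have hfejk := fej xbar hxbarUU k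
  have h1c : (0 : ℝ) ≤ 1 - (1 - eb) ^ 4 * ω ^ 2 / 4 := by
    have ha : (1 - eb) ^ 4 ≤ 1 := pow_le_one₀ (by linarith) (by linarith)
    have hb : ω ^ 2 ≤ 1 := pow_le_one₀ (by linarith) (by linarith)
    have ha0 : (0 : ℝ) ≤ (1 - eb) ^ 4 := by positivity
    have hb0 : (0 : ℝ) ≤ ω ^ 2 := by positivity
    nlinarith
  have hsq : ‖x (k + 1) - xbar‖ ^ 2 ≤
      (1 - (1 - eb) ^ 4 * ω ^ 2 / 4) * ‖x k - xbar‖ ^ 2 := by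
    have hlb2 : ((1 - eb) ^ 2 * ω * ‖x k - xbar‖ / 2) ^ 2 ≤ ‖x k - x (k + 1)‖ ^ 2 := by
      have h0 : (0 : ℝ) ≤ (1 - eb) ^ 2 * ω * ‖x k - xbar‖ / 2 := by positivity
      nlinarith
    nlinarith [hfejk]
  have hrhs : (Real.sqrt (1 - (1 - eb) ^ 4 * ω ^ 2 / 4) * ‖x k - xbar‖) ^ 2 =
      (1 - (1 - eb) ^ 4 * ω ^ 2 / 4) * ‖x k - xbar‖ ^ 2 := by
    rw [mul_pow, Real.sq_sqrt h1c]
  have hgoal : ‖x (k + 1) - xbar‖ ^ 2 ≤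
      (Real.sqrt (1 - (1 - eb) ^ 4 * ω ^ 2 / 4) * ‖x k - xbar‖) ^ 2 := by
    rw [hrhs]; exact hsq
  have hrnn : (0 : ℝ) ≤ Real.sqrt (1 - (1 - eb) ^ 4 * ω ^ 2 / 4) * ‖x k - xbar‖ := by
    positivity
  have hfin := Real.sqrt_le_sqrt hgoal
  rwa [Real.sqrt_sq (norm_nonneg _), Real.sqrt_sq hrnn] at hfin
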